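/- Combining the previous results: let J be symmetric, strictly diagonally dominant with positive diagonal, x ∈ R^N, and q: R^m → R^N differentiable with 1ᵀq ≡ Q and rank(∂q/∂z) = N − 1 at z. If ∂/∂z_i[xᵀq + (1/2)qᵀJ(z)q] = (1/2)qᵀ(∂J/∂z_i)q for all i, then there exists λ such that q(z) is the unique global minimizer of L(q) = xᵀq + (1/2)qᵀJq − λ(1ᵀq − Q). -/

import Mathlib

open Matrix

attribute [local instance] Matrix.normedAddCommGroup Matrix.normedSpace

lemma sdd_quadform_pos {N : ℕ} (A : Matrix (Fin N) (Fin N) ℝ) (hsymm : A.IsSymm)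
    (hdom : ∀ i, ∑ j ∈ Finset.univ.erase i, |A i j| < A i i)
    (d : Fin N → ℝ) (hd : d ≠ 0) : 0 < d ⬝ᵥ A.mulVec d := by
  classical
  have habs : ∀ i j, |A j i| = |A i j| := fun i j => by rw [hsymm.apply i j]
  have expand : d ⬝ᵥ A.mulVec d
      = ∑ i, (A i i * d i ^ 2 + ∑ j ∈ Finset.univ.erase i, d i * (A i j * d j)) := by
    simp only [dotProduct, mulVec, Finset.mul_sum]
    refine Finset.sum_congr rfl fun i _ => ?_
    rw [← Finset.add_sum_erase _ _ (Finset.mem_univ i)]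
    ring_nf
  have cross_bound : ∀ i j, -( |A i j| * (d i ^ 2 + d j ^ 2) / 2) ≤ d i * (A i j * d j) := by
    intro i j
    have h1 : |d i * (A i j * d j)| ≤ |A i j| * (d i ^ 2 + d j ^ 2) / 2 := by
      rw [abs_mul, abs_mul]
      nlinarith [sq_nonneg (|d i| - |d j|), sq_abs (d i), sq_abs (d j), abs_nonneg (A i j),
        abs_nonneg (d i), abs_nonneg (d j)]
    linarith [neg_abs_le (d i * (A i j * d j))]
  have core : ∑ i, ∑ j, |A i j| * d j ^ 2 = ∑ i, ∑ j, |A i j| * d i ^ 2 := by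
    rw [Finset.sum_comm]
    exact Finset.sum_congr rfl fun i _ => Finset.sum_congr rfl fun j _ => by rw [habs]
  have e1 : ∀ (g : Fin N → ℝ) (i : Fin N),
      ∑ j ∈ Finset.univ.erase i, g j = (∑ j, g j) - g i :=
    fun g i => Finset.sum_erase_eq_sub (Finset.mem_univ i)
  have swap : ∑ i, ∑ j ∈ Finset.univ.erase i, |A i j| * d j ^ 2
      = ∑ i, ∑ j ∈ Finset.univ.erase i, |A i j| * d i ^ 2 := by
    simp only [e1]
    rw [Finset.sum_sub_distrib, Finset.sum_sub_distrib, core]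
  have eqn : ∑ i, ∑ j ∈ Finset.univ.erase i, |A i j| * (d i ^ 2 + d j ^ 2) / 2
      = ∑ i, (∑ j ∈ Finset.univ.erase i, |A i j|) * d i ^ 2 := by
    have h2 : ∀ i, ∑ j ∈ Finset.univ.erase i, |A i j| * (d i ^ 2 + d j ^ 2) / 2
        = (∑ j ∈ Finset.univ.erase i, |A i j| * d i ^ 2) / 2
          + (∑ j ∈ Finset.univ.erase i, |A i j| * d j ^ 2) / 2 := by
      intro i
      rw [← add_div, ← Finset.sum_add_distrib, ← Finset.sum_div]
      congr 1
      exact Finset.sum_congr rfl fun j _ => by ring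
    calc ∑ i, ∑ j ∈ Finset.univ.erase i, |A i j| * (d i ^ 2 + d j ^ 2) / 2
        = ∑ i, ((∑ j ∈ Finset.univ.erase i, |A i j| * d i ^ 2) / 2
          + (∑ j ∈ Finset.univ.erase i, |A i j| * d j ^ 2) / 2) :=
          Finset.sum_congr rfl fun i _ => h2 i
      _ = (∑ i, ∑ j ∈ Finset.univ.erase i, |A i j| * d i ^ 2) / 2
          + (∑ i, ∑ j ∈ Finset.univ.erase i, |A i j| * d j ^ 2) / 2 := by
          rw [Finset.sum_add_distrib, Finset.sum_div, Finset.sum_div]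
      _ = ∑ i, ∑ j ∈ Finset.univ.erase i, |A i j| * d i ^ 2 := by rw [swap]; ring
      _ = ∑ i, (∑ j ∈ Finset.univ.erase i, |A i j|) * d i ^ 2 := by
          exact Finset.sum_congr rfl fun i _ => (Finset.sum_mul _ _ _).symm
  have lower : ∑ i, (A i i - ∑ j ∈ Finset.univ.erase i, |A i j|) * d i ^ 2 ≤ d ⬝ᵥ A.mulVec d := by
    rw [expand]
    have step : ∀ i, A i i * d i ^ 2 - ∑ j ∈ Finset.univ.erase i, |A i j| * (d i ^ 2 + d j ^ 2) / 2
        ≤ A i i * d i ^ 2 + ∑ j ∈ Finset.univ.erase i, d i * (A i j * d j) := by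
      intro i
      have hb := Finset.sum_le_sum (fun j (_ : j ∈ Finset.univ.erase i) => cross_bound i j)
      rw [Finset.sum_neg_distrib] at hb
      linarith
    calc ∑ i, (A i i - ∑ j ∈ Finset.univ.erase i, |A i j|) * d i ^ 2
        = ∑ i, (A i i * d i ^ 2
            - ∑ j ∈ Finset.univ.erase i, |A i j| * (d i ^ 2 + d j ^ 2) / 2) := by
          rw [Finset.sum_sub_distrib, eqn, ← Finset.sum_sub_distrib]
          exact Finset.sum_congr rfl fun i _ => by ring
      _ ≤ _ := Finset.sum_le_sum fun i _ => step i
  obtain ⟨i0, hi0⟩ : ∃ i, d i ≠ 0 := Function.ne_iff.1 hd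
  have pos : 0 < ∑ i, (A i i - ∑ j ∈ Finset.univ.erase i, |A i j|) * d i ^ 2 := by
    refine Finset.sum_pos' (fun i _ => mul_nonneg (by linarith [hdom i]) (sq_nonneg _))
      ⟨i0, Finset.mem_univ i0, ?_⟩
    exact mul_pos (by linarith [hdom i0]) (by positivity)
  linarith

lemma energy_alg {N : ℕ} (A B : Matrix (Fin N) (Fin N) ℝ) (hs : ∀ i j, A j i = A i j)
    (u w v : Fin N → ℝ) :
    ∑ i, v i * w i + ∑ i, ∑ j, (1:ℝ)/2 * (u i * (A i j * w j + u j * B i j) + A i j * u j * w i)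
      = (fun k => v k + A.mulVec u k) ⬝ᵥ w + 1/2 * (u ⬝ᵥ B.mulVec u) := by
  classical
  simp only [dotProduct, mulVec, Finset.mul_sum]
  have h3 : ∀ i j : Fin N, (1:ℝ)/2 * (u i * (A i j * w j + u j * B i j) + A i j * u j * w i)
      = 1/2 * (u j * (A i j * w i)) + 1/2 * (u j * (A i j * w i)) + 1/2 * (u i * (B i j * u j))
        + (1/2 * (u i * (A i j * w j)) - 1/2 * (u j * (A i j * w i))) := fun i j => by ring
  have hB : ∑ i : Fin N, ∑ j : Fin N, ((1:ℝ)/2 * (u i * (A i j * w j))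
        - 1/2 * (u j * (A i j * w i))) = 0 := by
    have : ∑ i : Fin N, ∑ j : Fin N, (1:ℝ)/2 * (u i * (A i j * w j))
        = ∑ i : Fin N, ∑ j : Fin N, (1:ℝ)/2 * (u j * (A i j * w i)) := by
      rw [Finset.sum_comm]
      exact Finset.sum_congr rfl fun i _ => Finset.sum_congr rfl fun j _ => by rw [hs]
    simp only [Finset.sum_sub_distrib]
    rw [this, sub_self]
  have hRHS : ∀ k, (v k + ∑ j, A k j * u j) * w k
      = v k * w k + ∑ j, ((1:ℝ)/2 * (u j * (A k j * w k)) + 1/2 * (u j * (A k j * w k))) := by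
    intro k
    rw [add_mul, Finset.sum_mul]
    congr 1
    exact Finset.sum_congr rfl fun j _ => by ring
  calc ∑ i, v i * w i + ∑ i, ∑ j, (1:ℝ)/2 * (u i * (A i j * w j + u j * B i j) + A i j * u j * w i)
      = ∑ i, v i * w i + ∑ i, ∑ j, ((1:ℝ)/2 * (u j * (A i j * w i)) + 1/2 * (u j * (A i j * w i))
          + 1/2 * (u i * (B i j * u j))
          + (1/2 * (u i * (A i j * w j)) - 1/2 * (u j * (A i j * w i)))) := by
        rw [Finset.sum_congr rfl fun i _ => Finset.sum_congr rfl fun j _ => h3 i j]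
    _ = ∑ i, v i * w i
          + (∑ i, ∑ j, ((1:ℝ)/2 * (u j * (A i j * w i)) + 1/2 * (u j * (A i j * w i)))
            + ∑ i, ∑ j, (1:ℝ)/2 * (u i * (B i j * u j))
            + ∑ i, ∑ j, ((1:ℝ)/2 * (u i * (A i j * w j)) - 1/2 * (u j * (A i j * w i)))) := by
        simp only [Finset.sum_add_distrib]
    _ = ∑ i, (v i * w i + ∑ j, ((1:ℝ)/2 * (u j * (A i j * w i)) + 1/2 * (u j * (A i j * w i))))
          + ∑ i, ∑ j, (1:ℝ)/2 * (u i * (B i j * u j)) := by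
        rw [hB]
        simp only [Finset.sum_add_distrib]
        ring
    _ = ∑ k, (v k + ∑ j, A k j * u j) * w k + ∑ i, ∑ j, (1:ℝ)/2 * (u i * (B i j * u j)) := by
        rw [Finset.sum_congr rfl fun k _ => (hRHS k).symm]

theorem reverse_qeq_full {N m : ℕ} (x : Fin N → ℝ)
    (J : (Fin m → ℝ) → Matrix (Fin N) (Fin N) ℝ) (q : (Fin m → ℝ) → (Fin N → ℝ))
    (hJdiff : Differentiable ℝ J) (hqdiff : Differentiable ℝ q)
    (hJsymm : ∀ z', (J z').IsSymm) (Q : ℝ) (z : Fin m → ℝ)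
    (hdiag : ∀ i, 0 < J z i i)
    (hdom : ∀ i, ∑ j ∈ Finset.univ.erase i, |J z i j| < J z i i)
    (hconstraint : ∀ z', ∑ j, q z' j = Q)
    (hrank : (Matrix.of fun (j : Fin N) (i : Fin m) =>
      fderiv ℝ q z (Pi.single i 1) j).rank = N - 1)
    (hforce : ∀ i : Fin m,
      fderiv ℝ (fun z => x ⬝ᵥ q z + (1 / 2) * (q z ⬝ᵥ (J z).mulVec (q z))) z (Pi.single i 1)
        = (1 / 2) * (q z ⬝ᵥ (fderiv ℝ J z (Pi.single i 1)).mulVec (q z))) :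
    ∃ lam : ℝ, ∀ p : Fin N → ℝ, p ≠ q z →
      x ⬝ᵥ q z + (1 / 2) * (q z ⬝ᵥ (J z).mulVec (q z)) - lam * ((∑ i, q z i) - Q)
        < x ⬝ᵥ p + (1 / 2) * (p ⬝ᵥ (J z).mulVec p) - lam * ((∑ i, p i) - Q) := by
  classical
  rcases Nat.eq_zero_or_pos N with hN | hN
  · subst hN
    refine ⟨0, fun p hp => absurd ?_ hp⟩
    funext i
    exact absurd i.2 (by omega)
  set qd := fderiv ℝ q z with hqd
  set Jd := fderiv ℝ J z with hJd
  have hqF : ∀ i : Fin N, HasFDerivAt (fun z' => q z' i)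
      ((ContinuousLinearMap.proj i).comp qd) z :=
    hasFDerivAt_pi'.1 (hqdiff z).hasFDerivAt
  have hJrow : ∀ i, HasFDerivAt (fun z' => J z' i)
      ((ContinuousLinearMap.proj i).comp Jd) z :=
    hasFDerivAt_pi'.1 (hJdiff z).hasFDerivAt
  have hJF : ∀ i j, HasFDerivAt (fun z' => J z' i j)
      ((ContinuousLinearMap.proj j).comp ((ContinuousLinearMap.proj i).comp Jd)) z :=
    fun i j => hasFDerivAt_pi'.1 (hJrow i) j
  -- derivative of the full energy, evaluated on any direction
  have hEnergy : ∀ e, fderiv ℝ (fun z => x ⬝ᵥ q z + (1 / 2) * (q z ⬝ᵥ (J z).mulVec (q z))) z e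
      = (fun k => x k + (J z).mulVec (q z) k) ⬝ᵥ (qd e)
        + (1 / 2) * (q z ⬝ᵥ (Jd e).mulVec (q z)) := by
    intro e
    have hdot : HasFDerivAt (fun z' => x ⬝ᵥ q z')
        (∑ i, x i • ((ContinuousLinearMap.proj i).comp qd)) z := by
      have h := HasFDerivAt.fun_sum (fun i (_ : i ∈ Finset.univ) => (hqF i).const_mul (x i))
      simpa [dotProduct] using h
    have hterm : ∀ i j, HasFDerivAt (fun z' => q z' i * (J z' i j * q z' j))
        (q z i • (J z i j • ((ContinuousLinearMap.proj j).comp qd)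
            + q z j • ((ContinuousLinearMap.proj j).comp ((ContinuousLinearMap.proj i).comp Jd)))
          + (J z i j * q z j) • ((ContinuousLinearMap.proj i).comp qd)) z :=
      fun i j => (hqF i).mul ((hJF i j).mul (hqF j))
    have hquad : HasFDerivAt (fun z' => q z' ⬝ᵥ (J z').mulVec (q z'))
        (∑ i, ∑ j, (q z i • (J z i j • ((ContinuousLinearMap.proj j).comp qd)
            + q z j • ((ContinuousLinearMap.proj j).comp ((ContinuousLinearMap.proj i).comp Jd)))
          + (J z i j * q z j) • ((ContinuousLinearMap.proj i).comp qd))) z := by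
      have h := HasFDerivAt.fun_sum (fun i (_ : i ∈ Finset.univ) =>
        HasFDerivAt.fun_sum (fun j (_ : j ∈ Finset.univ) => hterm i j))
      simpa [dotProduct, mulVec, Finset.mul_sum] using h
    have hE := hdot.fun_add (hquad.const_mul ((1:ℝ)/2))
    rw [hE.fderiv]
    simp only [ContinuousLinearMap.add_apply, ContinuousLinearMap.smul_apply,
      ContinuousLinearMap.coe_sum', Finset.sum_apply, ContinuousLinearMap.coe_comp',
      Function.comp_apply, ContinuousLinearMap.proj_apply, smul_eq_mul, Finset.mul_sum]
    exact energy_alg (J z) (Jd e) (fun i j => (hJsymm z).apply i j) (q z) (qd e) x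
  -- the constraint kills the sum of the Jacobian columns
  have hsum0 : ∀ e, ∑ j, qd e j = 0 := by
    intro e
    have hfun : (fun z' => ∑ j, q z' j) = fun _ => Q := funext hconstraint
    have h0 : fderiv ℝ (fun z' => ∑ j, q z' j) z = 0 := by
      rw [hfun]; exact fderiv_const_apply Q
    have h1 : fderiv ℝ (fun z' => ∑ j, q z' j) z
        = ∑ j, (ContinuousLinearMap.proj j).comp qd := by
      rw [fderiv_fun_sum (fun j _ => (hqF j).differentiableAt)]
      exact Finset.sum_congr rfl fun j _ => (hqF j).fderiv
    have := congrArg (fun (L : (Fin m → ℝ) →L[ℝ] ℝ) => L e) (h1.symm.trans h0)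
    simpa using this
  -- the force condition kills v := x + J q against the Jacobian columns
  set v : Fin N → ℝ := fun k => x k + (J z).mulVec (q z) k with hv
  have hvperp : ∀ i : Fin m, v ⬝ᵥ qd (Pi.single i 1) = 0 := by
    intro i
    have h := hforce i
    rw [hEnergy (Pi.single i 1)] at h
    linarith
  -- rank argument: v is a multiple of the all-ones vector
  set M : Matrix (Fin N) (Fin m) ℝ :=
    Matrix.of fun (j : Fin N) (i : Fin m) => qd (Pi.single i 1) j with hM
  have hker : ∀ u : Fin N → ℝ, (∀ i : Fin m, ∑ j, u j * M j i = 0) →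
      Mᵀ.mulVecLin u = 0 := by
    intro u hu
    funext i
    simpa [Matrix.mulVecLin, mulVec, vecMul, dotProduct, transpose_apply, mul_comm] using hu i
  have hone : (Mᵀ.mulVecLin) (fun _ => (1:ℝ)) = 0 := by
    refine hker _ fun i => ?_
    simpa [hM] using hsum0 (Pi.single i 1)
  have hvker : (Mᵀ.mulVecLin) v = 0 := by
    refine hker _ fun i => ?_
    simpa [dotProduct, hM] using hvperp i
  have hdimker : Module.finrank ℝ (LinearMap.ker Mᵀ.mulVecLin) = 1 := by
    have h1 := LinearMap.finrank_range_add_finrank_ker (Mᵀ.mulVecLin)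
    have h2 : Mᵀ.rank = N - 1 := (Matrix.rank_transpose M).trans hrank
    unfold Matrix.rank at h2
    rw [h2, Module.finrank_pi] at h1
    simp only [Fintype.card_fin] at h1
    omega
  have honene : (fun _ => (1:ℝ) : Fin N → ℝ) ≠ 0 := by
    intro h
    have := congrFun h ⟨0, hN⟩
    norm_num at this
  have hspan : (ℝ ∙ (fun _ => (1:ℝ) : Fin N → ℝ)) = LinearMap.ker Mᵀ.mulVecLin := by
    refine Submodule.eq_of_le_of_finrank_le ?_ ?_
    · rw [Submodule.span_le, Set.singleton_subset_iff]
      exact LinearMap.mem_ker.2 hone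
    · rw [hdimker, finrank_span_singleton honene]
  obtain ⟨lam, hlam⟩ : ∃ lam : ℝ, lam • (fun _ => (1:ℝ) : Fin N → ℝ) = v := by
    have : v ∈ (ℝ ∙ (fun _ => (1:ℝ) : Fin N → ℝ)) := by
      rw [hspan]; exact LinearMap.mem_ker.2 hvker
    exact Submodule.mem_span_singleton.1 this
  have hvlam : ∀ k, v k = lam := fun k => by
    have := congrFun hlam k; simpa using this.symm
  refine ⟨lam, fun p hp => ?_⟩
  -- the Lagrangian difference is the positive quadratic form in p - q z
  have hsymmJ : ∀ a b : Fin N → ℝ, a ⬝ᵥ (J z).mulVec b = b ⬝ᵥ (J z).mulVec a := by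
    intro a b
    rw [dotProduct_mulVec, ← mulVec_transpose, (hJsymm z).eq, dotProduct_comm]
  have key : x ⬝ᵥ p - x ⬝ᵥ q z
        + (p ⬝ᵥ (J z).mulVec (q z) - q z ⬝ᵥ (J z).mulVec (q z))
      = lam * ((∑ i, p i) - ∑ i, q z i) := by
    simp only [dotProduct, Finset.mul_sum, ← Finset.sum_sub_distrib, ← Finset.sum_add_distrib]
    refine Finset.sum_congr rfl fun k _ => ?_
    have hk : x k + (J z).mulVec (q z) k = lam := hvlam k
    have : (J z).mulVec (q z) k = lam - x k := by linarith
    rw [this]; ring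
  have expand2 : (p - q z) ⬝ᵥ (J z).mulVec (p - q z)
      = p ⬝ᵥ (J z).mulVec p - 2 * (p ⬝ᵥ (J z).mulVec (q z)) + q z ⬝ᵥ (J z).mulVec (q z) := by
    rw [mulVec_sub, dotProduct_sub, sub_dotProduct, sub_dotProduct, hsymmJ (q z) p]
    ring
  have hpos : 0 < (p - q z) ⬝ᵥ (J z).mulVec (p - q z) :=
    sdd_quadform_pos (J z) (hJsymm z) hdom (p - q z) (sub_ne_zero.2 hp)
  rw [expand2] at hpos
  linarith [key]
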